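/- arXiv:1407.6133 — 3 statements merged into one kernel-verified Lean document; each statement's English description precedes it below -/
import Mathlib

section
/- Let f be a convex, proper, lsc function on R^n with nonempty solution set X* of min_{x∈X} f over a closed convex set X ⊆ dom(f). Consider the iteration x^{(k+1)} = P_{X,D_k^{-1}}(x^{(k)} - α_k D_k u^{(k)}) with u^{(k)} ∈ ∂_{ε_k} f(x^{(k)}), ||u^{(k)}|| ≤ ρ, and symmetric positive definite matrices D_k with ||D_k|| ≤ L_k, ||D_k^{-1}|| ≤ L_k, 1 ≤ L_k ≤ L. Then for every x̃ ∈ X*, the iterates satisfy ||x^{(k+1)} - x̃||_{D_k^{-1}}^2 ≤ ||x^{(k)} - x̃||_{D_k^{-1}}^2 + 5 L_k α_k^2 ρ^2 + 2 L_k α_k ε_k. -/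
open Matrix

lemma symdot {n : ℕ} {E : Matrix (Fin n) (Fin n) ℝ} (hE : E.IsHermitian)
    (a c : Fin n → ℝ) : a ⬝ᵥ E.mulVec c = c ⬝ᵥ E.mulVec a := by
  have hT : Eᵀ = E := by
    have := hE.eq
    rwa [conjTranspose_eq_transpose_of_trivial] at this
  rw [dotProduct_mulVec, ← hT, vecMul_transpose, dotProduct_comm, hT]

lemma expand_sub {n : ℕ} {E : Matrix (Fin n) (Fin n) ℝ} (hE : E.IsHermitian)
    (a c : Fin n → ℝ) : (a - c) ⬝ᵥ E.mulVec (a - c)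
      = a ⬝ᵥ E.mulVec a - 2 * (a ⬝ᵥ E.mulVec c) + c ⬝ᵥ E.mulVec c := by
  have h := symdot hE a c
  simp [mulVec_sub, sub_dotProduct, dotProduct_sub]
  linarith

lemma dot_nonneg' {n : ℕ} {E : Matrix (Fin n) (Fin n) ℝ} (hE : E.PosSemidef)
    (a : Fin n → ℝ) : 0 ≤ a ⬝ᵥ E.mulVec a := by
  simpa using hE.dotProduct_mulVec_nonneg a

/-- Basic inequality for the scaled ε-subgradient projection method: for every
solution `x̃` of `min_{x∈X} f`,
`‖x^{k+1} - x̃‖²_{D_k⁻¹} ≤ ‖x^k - x̃‖²_{D_k⁻¹} + 5 L_k α_k² ρ² + 2 L_k α_k ε_k`. -/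
theorem stmt8 {n : ℕ} (f : (Fin n → ℝ) → EReal)
    (hproper_bot : ∀ z, f z ≠ ⊥)
    (hconv : ∀ a b : Fin n → ℝ, ∀ t : ℝ, 0 ≤ t → t ≤ 1 →
      f (t • a + (1 - t) • b) ≤ ((t : ℝ) : EReal) * f a + (((1 - t : ℝ)) : EReal) * f b)
    (hlsc : LowerSemicontinuous f)
    (X : Set (Fin n → ℝ)) (hXne : X.Nonempty) (hXcl : IsClosed X) (hXconv : Convex ℝ X)
    (hXdom : ∀ z ∈ X, f z ≠ ⊤)
    (x u : ℕ → Fin n → ℝ) (ε α L : ℕ → ℝ) (ρ : ℝ) (Lbd : ℝ)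
    (D : ℕ → Matrix (Fin n) (Fin n) ℝ) (hD : ∀ k, (D k).PosDef)
    (hε : ∀ k, 0 ≤ ε k) (hα : ∀ k, 0 < α k)
    (hx0 : x 0 ∈ X)
    -- `u k` is an `ε k`-subgradient of `f` at `x k`
    (hu : ∀ k, ∀ z : Fin n → ℝ,
      f (x k) + (((u k ⬝ᵥ (z - x k) - ε k : ℝ)) : EReal) ≤ f z)
    -- boundedness of the subgradients: `‖u k‖ ≤ ρ`
    (hρ : ∀ k, Real.sqrt (u k ⬝ᵥ u k) ≤ ρ)
    -- spectral bounds `‖D k‖ ≤ L k` and `‖(D k)⁻¹‖ ≤ L k`, with `1 ≤ L k ≤ Lbd`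
    (hDub : ∀ k, ∀ v : Fin n → ℝ, v ⬝ᵥ (D k).mulVec v ≤ L k * (v ⬝ᵥ v))
    (hDlb : ∀ k, ∀ v : Fin n → ℝ, v ⬝ᵥ v ≤ L k * (v ⬝ᵥ (D k).mulVec v))
    (hL1 : ∀ k, 1 ≤ L k) (hLbd : ∀ k, L k ≤ Lbd)
    -- `x (k+1)` is the scaled projection of `x k - α k • D k u k` onto `X`
    (hproj : ∀ k, x (k + 1) ∈ X ∧ ∀ w ∈ X,
      ((x k - α k • (D k).mulVec (u k)) - x (k + 1)) ⬝ᵥ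
          (D k)⁻¹.mulVec ((x k - α k • (D k).mulVec (u k)) - x (k + 1))
        ≤ ((x k - α k • (D k).mulVec (u k)) - w) ⬝ᵥ
            (D k)⁻¹.mulVec ((x k - α k • (D k).mulVec (u k)) - w))
    -- `x̃` is a solution of `min_{x ∈ X} f`
    (xt : Fin n → ℝ) (hxt : xt ∈ X) (hxtmin : ∀ z ∈ X, f xt ≤ f z) :
    ∀ k, (x (k + 1) - xt) ⬝ᵥ (D k)⁻¹.mulVec (x (k + 1) - xt)
      ≤ (x k - xt) ⬝ᵥ (D k)⁻¹.mulVec (x k - xt)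
        + 5 * L k * (α k) ^ 2 * ρ ^ 2 + 2 * L k * α k * ε k := by
  have hxkX : ∀ m, x m ∈ X := by
    intro m
    induction m with
    | zero => exact hx0
    | succ m _ => exact (hproj m).1
  intro k
  obtain ⟨hpX, hmin⟩ := hproj k
  set E := (D k)⁻¹ with hEdef
  have hE : E.PosDef := (hD k).inv
  have hEH : E.IsHermitian := hE.1
  set y := x k - α k • (D k).mulVec (u k) with hy
  set p := x (k + 1) with hp
  set c := (y - p) ⬝ᵥ E.mulVec (xt - p) with hc
  set M := (xt - p) ⬝ᵥ E.mulVec (xt - p) with hM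
  have hM0 : 0 ≤ M := dot_nonneg' hE.posSemidef _
  have hq0 : 0 ≤ (y - p) ⬝ᵥ E.mulVec (y - p) := dot_nonneg' hE.posSemidef _
  -- variational inequality
  have hvi : c ≤ 0 := by
    by_contra hcpos
    push_neg at hcpos
    set t := min 1 (c / (M + 1)) with ht
    have ht0 : 0 < t := lt_min one_pos (div_pos hcpos (by linarith))
    have ht1 : t ≤ 1 := min_le_left _ _
    have htle : t * (M + 1) ≤ c := by
      have := min_le_right 1 (c / (M + 1))
      calc t * (M + 1) ≤ (c / (M + 1)) * (M + 1) := by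
            apply mul_le_mul_of_nonneg_right this (by linarith)
        _ = c := by field_simp
    have hw : (1 - t) • p + t • xt ∈ X :=
      hXconv hpX hxt (by linarith) (le_of_lt ht0) (by ring)
    have hkey := hmin _ hw
    have hrw : y - ((1 - t) • p + t • xt) = (y - p) - t • (xt - p) := by
      funext i
      simp [smul_sub]
      ring
    rw [hrw] at hkey
    have hexp : ((y - p) - t • (xt - p)) ⬝ᵥ E.mulVec ((y - p) - t • (xt - p))
        = (y - p) ⬝ᵥ E.mulVec (y - p) - 2 * t * c + t ^ 2 * M := by
      rw [expand_sub hEH]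
      simp only [mulVec_smul, dotProduct_smul, smul_dotProduct, smul_eq_mul, ← hc, ← hM]
      ring
    rw [hexp] at hkey
    nlinarith [mul_pos ht0 hcpos, sq_nonneg t]
  -- nonexpansiveness: q(p - xt) ≤ q(y - xt)
  have hstep1 : (p - xt) ⬝ᵥ E.mulVec (p - xt) ≤ (y - xt) ⬝ᵥ E.mulVec (y - xt) := by
    have h1 : (y - xt) ⬝ᵥ E.mulVec (y - xt)
        = (y - p) ⬝ᵥ E.mulVec (y - p) - 2 * c + M := by
      have : y - xt = (y - p) - (xt - p) := by
        funext i; simp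
      rw [this, expand_sub hEH]
    have h2 : (p - xt) ⬝ᵥ E.mulVec (p - xt) = M := by
      have : p - xt = -(xt - p) := by funext i; simp
      rw [this, hM, mulVec_neg, neg_dotProduct, dotProduct_neg, neg_neg]
    rw [h1, h2]
    linarith
  -- expansion of q(y - xt)
  have hinv : ∀ v : Fin n → ℝ, E.mulVec ((D k).mulVec v) = v := by
    intro v
    rw [mulVec_mulVec, hEdef, nonsing_inv_mul _ (hD k).det_pos.ne'.isUnit, one_mulVec]
  have hstep2 : (y - xt) ⬝ᵥ E.mulVec (y - xt)
      = (x k - xt) ⬝ᵥ E.mulVec (x k - xt)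
        - 2 * (α k) * ((x k - xt) ⬝ᵥ u k)
        + (α k) ^ 2 * (u k ⬝ᵥ (D k).mulVec (u k)) := by
    have hrw : y - xt = (x k - xt) - α k • (D k).mulVec (u k) := by
      rw [hy, sub_right_comm]
    rw [hrw, expand_sub hEH]
    simp only [mulVec_smul, hinv, dotProduct_smul, smul_dotProduct, smul_eq_mul]
    rw [dotProduct_comm ((D k).mulVec (u k)) (u k)]
    ring
  -- subgradient inequality
  have hsub : u k ⬝ᵥ (xt - x k) - ε k ≤ 0 := by
    have h1 := hu k xt
    have h2 := hxtmin (x k) (hxkX k)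
    have h3 : f (x k) + ((u k ⬝ᵥ (xt - x k) - ε k : ℝ) : EReal) ≤ f (x k) := le_trans h1 h2
    have hne_top : f (x k) ≠ ⊤ := hXdom _ (hxkX k)
    have hne_bot : f (x k) ≠ ⊥ := hproper_bot _
    lift f (x k) to ℝ using ⟨hne_top, hne_bot⟩ with r
    rw [← EReal.coe_add] at h3
    have := EReal.coe_le_coe_iff.mp h3
    linarith
  have hdotu : (x k - xt) ⬝ᵥ u k = -(u k ⬝ᵥ (xt - x k)) := by
    rw [dotProduct_comm]
    simp [sub_dotProduct, dotProduct_sub]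
  -- bounds
  have hρ0 : 0 ≤ ρ := le_trans (Real.sqrt_nonneg _) (hρ k)
  have huu : 0 ≤ u k ⬝ᵥ u k := Finset.sum_nonneg fun i _ => mul_self_nonneg _
  have huρ : u k ⬝ᵥ u k ≤ ρ ^ 2 := by
    nlinarith [hρ k, Real.sq_sqrt huu, Real.sqrt_nonneg (u k ⬝ᵥ u k)]
  have hDu : u k ⬝ᵥ (D k).mulVec (u k) ≤ L k * ρ ^ 2 := by
    calc u k ⬝ᵥ (D k).mulVec (u k) ≤ L k * (u k ⬝ᵥ u k) := hDub k (u k)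
      _ ≤ L k * ρ ^ 2 := by
          apply mul_le_mul_of_nonneg_left huρ (by linarith [hL1 k])
  -- combine
  have hαk := hα k
  have hεk := hε k
  have hLk := hL1 k
  have h5 : 0 ≤ L k * (α k) ^ 2 * ρ ^ 2 := by positivity
  calc (p - xt) ⬝ᵥ E.mulVec (p - xt)
      ≤ (y - xt) ⬝ᵥ E.mulVec (y - xt) := hstep1
    _ = (x k - xt) ⬝ᵥ E.mulVec (x k - xt)
        - 2 * (α k) * ((x k - xt) ⬝ᵥ u k)
        + (α k) ^ 2 * (u k ⬝ᵥ (D k).mulVec (u k)) := hstep2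
    _ ≤ (x k - xt) ⬝ᵥ E.mulVec (x k - xt)
        + 5 * L k * (α k) ^ 2 * ρ ^ 2 + 2 * L k * α k * ε k := by
        rw [hdotu]
        have f1 : α k ^ 2 * (u k ⬝ᵥ (D k).mulVec (u k)) ≤ α k ^ 2 * (L k * ρ ^ 2) :=
          mul_le_mul_of_nonneg_left hDu (sq_nonneg (α k))
        have f2 : 2 * α k * (u k ⬝ᵥ (xt - x k)) ≤ 2 * α k * ε k :=
          mul_le_mul_of_nonneg_left (by linarith) (by linarith)
        have f3 : 2 * α k * ε k ≤ 2 * L k * α k * ε k := by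
          nlinarith [mul_nonneg (mul_nonneg hαk.le hεk) (by linarith : (0:ℝ) ≤ L k - 1)]
        have f4 : α k ^ 2 * (L k * ρ ^ 2) ≤ 5 * L k * α k ^ 2 * ρ ^ 2 := by nlinarith [h5]
        linarith
end

section
/- Under the hypotheses of the scaled ε-subgradient method (x^{(k+1)} = P_{X,D_k^{-1}}(x^{(k)} - α_k D_k u^{(k)}), u^{(k)} ∈ ∂_{ε_k} f(x^{(k)}), ||u^{(k)}|| ≤ ρ, ||D_k||, ||D_k^{-1}|| ≤ L_k ≤ L), if ε_k → 0, Σ α_k = ∞, Σ α_k^2 < ∞, Σ ε_k α_k < ∞, and L_k^2 = 1 + γ_k with Σ γ_k < ∞, then the sequence {x^{(k)}} converges to a point of the solution set X* of min_{x∈X} f, assumed nonempty. -/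
open Matrix

section AuxMatrix

variable {n : ℕ}

lemma dot_self_nonneg' (v : Fin n → ℝ) : 0 ≤ v ⬝ᵥ v :=
  Finset.sum_nonneg (fun i _ => mul_self_nonneg (v i))

lemma norm_le_sqrt_dot (v : Fin n → ℝ) : ‖v‖ ≤ Real.sqrt (v ⬝ᵥ v) := by
  rw [pi_norm_le_iff_of_nonneg (Real.sqrt_nonneg _)]
  intro i
  rw [Real.norm_eq_abs, ← Real.sqrt_sq_eq_abs]
  apply Real.sqrt_le_sqrt
  have h1 := Finset.single_le_sum (f := fun j => v j * v j)
    (fun j _ => mul_self_nonneg (v j)) (Finset.mem_univ i)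
  simpa [pow_two, dotProduct] using h1

lemma dot_cs' (a b : Fin n → ℝ) : (a ⬝ᵥ b)^2 ≤ (a ⬝ᵥ a) * (b ⬝ᵥ b) := by
  simpa [dotProduct, pow_two] using Finset.sum_mul_sq_le_sq_mul_sq Finset.univ a b

lemma pd_nonneg' {M : Matrix (Fin n) (Fin n) ℝ} (h : M.PosDef) (v : Fin n → ℝ) :
    0 ≤ v ⬝ᵥ M.mulVec v := by
  have := h.posSemidef.dotProduct_mulVec_nonneg v
  simpa using this

lemma pd_symm' {M : Matrix (Fin n) (Fin n) ℝ} (h : M.PosDef) (a b : Fin n → ℝ) :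
    a ⬝ᵥ M.mulVec b = b ⬝ᵥ M.mulVec a := by
  have hsym : Mᵀ = M := h.isHermitian
  rw [dotProduct_mulVec, ← mulVec_transpose, hsym, dotProduct_comm]

lemma pd_expand' {M : Matrix (Fin n) (Fin n) ℝ} (h : M.PosDef) (a b : Fin n → ℝ) (t : ℝ) :
    (a + t • b) ⬝ᵥ M.mulVec (a + t • b)
      = a ⬝ᵥ M.mulVec a + 2 * t * (a ⬝ᵥ M.mulVec b) + t^2 * (b ⬝ᵥ M.mulVec b) := by
  have hba := pd_symm' h b a
  simp only [mulVec_add, mulVec_smul, dotProduct_add, add_dotProduct, dotProduct_smul,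
    smul_dotProduct, smul_eq_mul]
  rw [hba]; ring

lemma pd_cs' {M : Matrix (Fin n) (Fin n) ℝ} (h : M.PosDef) (a b : Fin n → ℝ) :
    (a ⬝ᵥ M.mulVec b)^2 ≤ (a ⬝ᵥ M.mulVec a) * (b ⬝ᵥ M.mulVec b) := by
  have hq : ∀ t : ℝ, 0 ≤ (b ⬝ᵥ M.mulVec b) * (t*t) + (2 * (a ⬝ᵥ M.mulVec b)) * t + (a ⬝ᵥ M.mulVec a) := by
    intro t
    have := pd_nonneg' h (a + t • b)
    rw [pd_expand' h a b t] at this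
    nlinarith [this]
  have hd := discrim_le_zero hq
  rw [discrim] at hd
  nlinarith [hd]

lemma pd_mul_inv' {M : Matrix (Fin n) (Fin n) ℝ} (h : M.PosDef) (v : Fin n → ℝ) :
    M.mulVec (M⁻¹.mulVec v) = v := by
  rw [mulVec_mulVec, Matrix.mul_nonsing_inv _ (isUnit_iff_ne_zero.2 h.det_pos.ne'), one_mulVec]

lemma pd_inv_ub' {M : Matrix (Fin n) (Fin n) ℝ} (h : M.PosDef) {L : ℝ} (hL : 0 ≤ L)
    (hlb : ∀ v : Fin n → ℝ, v ⬝ᵥ v ≤ L * (v ⬝ᵥ M.mulVec v)) (v : Fin n → ℝ) :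
    v ⬝ᵥ M⁻¹.mulVec v ≤ L * (v ⬝ᵥ v) := by
  set w := M⁻¹.mulVec v with hw
  have hv : M.mulVec w = v := pd_mul_inv' h v
  have hvw : v ⬝ᵥ w = w ⬝ᵥ M.mulVec w := by rw [← hv, dotProduct_comm]
  have h0 : 0 ≤ v ⬝ᵥ w := hvw ▸ pd_nonneg' h w
  have hvv : 0 ≤ v ⬝ᵥ v := dot_self_nonneg' v
  rcases eq_or_lt_of_le h0 with h0' | h0'
  · rw [← h0']; exact mul_nonneg hL hvv
  · have hcs : (v ⬝ᵥ w)^2 ≤ (v ⬝ᵥ v) * (w ⬝ᵥ w) := dot_cs' v w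
    have hb : w ⬝ᵥ w ≤ L * (w ⬝ᵥ M.mulVec w) := hlb w
    rw [← hvw] at hb
    nlinarith [hcs, hb, h0']

lemma pd_inv_lb' {M : Matrix (Fin n) (Fin n) ℝ} (h : M.PosDef) {L : ℝ} (hL : 0 ≤ L)
    (hub : ∀ v : Fin n → ℝ, v ⬝ᵥ M.mulVec v ≤ L * (v ⬝ᵥ v)) (v : Fin n → ℝ) :
    v ⬝ᵥ v ≤ L * (v ⬝ᵥ M⁻¹.mulVec v) := by
  set w := M⁻¹.mulVec v with hw
  have hv : M.mulVec w = v := pd_mul_inv' h v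
  have hvw : v ⬝ᵥ w = w ⬝ᵥ M.mulVec w := by rw [← hv, dotProduct_comm]
  have h0 : 0 ≤ v ⬝ᵥ w := hvw ▸ pd_nonneg' h w
  have hvv : 0 ≤ v ⬝ᵥ v := dot_self_nonneg' v
  rcases eq_or_lt_of_le hvv with h0' | h0'
  · rw [← h0']; positivity
  · have hkey : w ⬝ᵥ M.mulVec (M.mulVec w) = v ⬝ᵥ v := by
      rw [pd_symm' h w (M.mulVec w), hv]
    have hcs := pd_cs' h w (M.mulVec w)
    rw [hkey, hv] at hcs
    have hb : v ⬝ᵥ M.mulVec v ≤ L * (v ⬝ᵥ v) := hub v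
    rw [dotProduct_comm w v] at hcs
    have hmul := mul_le_mul_of_nonneg_left hb h0
    nlinarith [hcs, hmul, h0']

lemma proj_vi' {Q : Matrix (Fin n) (Fin n) ℝ} (hQ : Q.PosDef) {X : Set (Fin n → ℝ)}
    (hXconv : Convex ℝ X) (y z : Fin n → ℝ) (hz : z ∈ X)
    (hmin : ∀ w ∈ X, (y - z) ⬝ᵥ Q.mulVec (y - z) ≤ (y - w) ⬝ᵥ Q.mulVec (y - w)) :
    ∀ w ∈ X, (y - z) ⬝ᵥ Q.mulVec (w - z) ≤ 0 := by
  intro w hw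
  set a := y - z with ha
  set d := w - z with hd
  have key : ∀ t : ℝ, 0 < t → t ≤ 1 → 2 * (a ⬝ᵥ Q.mulVec d) ≤ t * (d ⬝ᵥ Q.mulVec d) := by
    intro t ht0 ht1
    have hmem : z + t • d ∈ X := by
      have h2 : (1 - t) • z + t • w ∈ X :=
        hXconv hz hw (by linarith) (le_of_lt ht0) (by ring)
      have heq : z + t • d = (1 - t) • z + t • w := by
        simp only [hd, smul_sub]
        module
      rw [heq]; exact h2
    have h3 := hmin _ hmem
    have h4 : y - (z + t • d) = a + t • (-d) := by
      simp only [ha]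
      module
    rw [h4, pd_expand' hQ a (-d) t] at h3
    simp only [mulVec_neg, dotProduct_neg, neg_dotProduct, neg_neg] at h3
    nlinarith [h3, ht0, sq_nonneg t]
  have hdd : 0 ≤ d ⬝ᵥ Q.mulVec d := pd_nonneg' hQ d
  by_contra hcon
  push_neg at hcon
  rcases eq_or_lt_of_le hdd with h0 | h0
  · have := key 1 one_pos le_rfl
    rw [← h0] at this
    linarith
  · set t0 := min 1 ((a ⬝ᵥ Q.mulVec d) / (d ⬝ᵥ Q.mulVec d)) with ht0
    have ht0pos : 0 < t0 := lt_min one_pos (div_pos hcon h0)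
    have := key t0 ht0pos (min_le_left _ _)
    have h5 : t0 * (d ⬝ᵥ Q.mulVec d) ≤ (a ⬝ᵥ Q.mulVec d) := by
      have h6 : t0 ≤ (a ⬝ᵥ Q.mulVec d) / (d ⬝ᵥ Q.mulVec d) := min_le_right _ _
      calc t0 * (d ⬝ᵥ Q.mulVec d) ≤ ((a ⬝ᵥ Q.mulVec d) / (d ⬝ᵥ Q.mulVec d)) * (d ⬝ᵥ Q.mulVec d) :=
            mul_le_mul_of_nonneg_right h6 hdd
        _ = (a ⬝ᵥ Q.mulVec d) := div_mul_cancel₀ _ h0.ne'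
    linarith

lemma step_ineq' {D : Matrix (Fin n) (Fin n) ℝ} (hD : D.PosDef) {X : Set (Fin n → ℝ)}
    (hXconv : Convex ℝ X) {L Lbd ρ α σ : ℝ} (hL1 : 1 ≤ L) (hLbd : L ≤ Lbd)
    (hub : ∀ v : Fin n → ℝ, v ⬝ᵥ D.mulVec v ≤ L * (v ⬝ᵥ v))
    {xk xk1 p u : Fin n → ℝ} (hp : p ∈ X) (hxk1 : xk1 ∈ X)
    (hα : 0 < α)
    (hmin : ∀ w ∈ X, ((xk - α • D.mulVec u) - xk1) ⬝ᵥ D⁻¹.mulVec ((xk - α • D.mulVec u) - xk1)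
        ≤ ((xk - α • D.mulVec u) - w) ⬝ᵥ D⁻¹.mulVec ((xk - α • D.mulVec u) - w))
    (hsub : u ⬝ᵥ (p - xk) ≤ σ)
    (hρ : u ⬝ᵥ u ≤ ρ^2) :
    (xk1 - p) ⬝ᵥ D⁻¹.mulVec (xk1 - p)
      ≤ (xk - p) ⬝ᵥ D⁻¹.mulVec (xk - p) + 2*α*σ + α^2 * (Lbd * ρ^2) := by
  have hQ : (D⁻¹).PosDef := hD.inv
  set y := xk - α • D.mulVec u with hy
  have hvi := proj_vi' hQ hXconv y xk1 hxk1 hmin p hp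
  have hid : y - p = (y - xk1) + (1:ℝ) • (xk1 - p) := by module
  have hexp1 : (y - p) ⬝ᵥ D⁻¹.mulVec (y - p)
      = (y - xk1) ⬝ᵥ D⁻¹.mulVec (y - xk1) + 2 * ((y - xk1) ⬝ᵥ D⁻¹.mulVec (xk1 - p))
        + (xk1 - p) ⬝ᵥ D⁻¹.mulVec (xk1 - p) := by
    rw [hid, pd_expand' hQ _ _ 1]; ring
  have hneg : (y - xk1) ⬝ᵥ D⁻¹.mulVec (xk1 - p) = -((y - xk1) ⬝ᵥ D⁻¹.mulVec (p - xk1)) := by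
    have h7 : xk1 - p = -(p - xk1) := by module
    rw [h7, mulVec_neg, dotProduct_neg]
  have h1 : (xk1 - p) ⬝ᵥ D⁻¹.mulVec (xk1 - p) ≤ (y - p) ⬝ᵥ D⁻¹.mulVec (y - p) := by
    have h0 := pd_nonneg' hQ (y - xk1)
    rw [hexp1, hneg]
    linarith [hvi]
  have hid2 : y - p = (xk - p) + α • (-(D.mulVec u)) := by rw [hy]; module
  have hQDu : D⁻¹.mulVec (D.mulVec u) = u := by
    rw [mulVec_mulVec, Matrix.nonsing_inv_mul _ (isUnit_iff_ne_zero.2 hD.det_pos.ne'), one_mulVec]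
  have hexp2 : (y - p) ⬝ᵥ D⁻¹.mulVec (y - p)
      = (xk - p) ⬝ᵥ D⁻¹.mulVec (xk - p) - 2 * α * ((xk - p) ⬝ᵥ u)
        + α^2 * ((D.mulVec u) ⬝ᵥ u) := by
    rw [hid2, pd_expand' hQ _ _ α]
    simp only [mulVec_neg, dotProduct_neg, neg_dotProduct, neg_neg, hQDu]
    ring
  have hb1 : (D.mulVec u) ⬝ᵥ u ≤ Lbd * ρ^2 := by
    have h2 : (D.mulVec u) ⬝ᵥ u = u ⬝ᵥ D.mulVec u := dotProduct_comm _ _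
    have h3 := hub u
    have h4 := dot_self_nonneg' u
    nlinarith [h3, h4]
  have hb2 : -((xk - p) ⬝ᵥ u) ≤ σ := by
    have h5 : (xk - p) ⬝ᵥ u = -(u ⬝ᵥ (p - xk)) := by
      rw [dotProduct_comm]
      have h8 : xk - p = -(p - xk) := by module
      rw [h8, dotProduct_neg]
    rw [h5, neg_neg]
    exact hsub
  have hα2 : 0 ≤ α^2 := sq_nonneg α
  nlinarith [h1, hexp2, hb1, hb2, mul_le_mul_of_nonneg_left hb1 hα2, hα]

end AuxMatrix

section AuxSeq

lemma qfejer (a δ b c : ℕ → ℝ) (ha : ∀ k, 0 ≤ a k) (hδ : ∀ k, 0 ≤ δ k) (hb : ∀ k, 0 ≤ b k)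
    (hc : ∀ k, 0 ≤ c k)
    (hrec : ∀ k, a (k + 1) ≤ (1 + δ k) * a k - c k + b k)
    (hδs : Summable δ) (hbs : Summable b) :
    (∃ Bd, 0 ≤ Bd ∧ ∀ k, a k ≤ Bd) ∧
      (∃ l, Filter.Tendsto a Filter.atTop (nhds l)) ∧ Summable c := by
  set P : ℕ → ℝ := fun k => ∏ j ∈ Finset.range k, (1 + δ j) with hP
  have hP1 : ∀ k, 1 ≤ P k := by
    intro k
    calc (1:ℝ) = ∏ _j ∈ Finset.range k, (1:ℝ) := by simp
      _ ≤ P k := Finset.prod_le_prod (fun j _ => zero_le_one) (fun j _ => by linarith [hδ j])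
  have hPE : ∀ k, P k ≤ Real.exp (∑' j, δ j) := by
    intro k
    calc P k ≤ ∏ j ∈ Finset.range k, Real.exp (δ j) :=
          Finset.prod_le_prod (fun j _ => by linarith [hδ j]) (fun j _ => Real.add_one_le_exp (δ j) |>.trans_eq' (by ring_nf))
      _ = Real.exp (∑ j ∈ Finset.range k, δ j) := by rw [Real.exp_sum]
      _ ≤ Real.exp (∑' j, δ j) := Real.exp_le_exp.2 (Summable.sum_le_tsum _ (fun j _ => hδ j) hδs)
  set Bd : ℝ := (a 0 + ∑' j, b j) * Real.exp (∑' j, δ j) with hBd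
  have htb : 0 ≤ ∑' j, b j := tsum_nonneg hb
  have haB : ∀ k, a k ≤ Bd := by
    have key : ∀ k, a k ≤ (a 0 + ∑ j ∈ Finset.range k, b j) * P k := by
      intro k
      induction k with
      | zero => simp [hP]
      | succ k ih =>
        have h1 : a (k + 1) ≤ (1 + δ k) * a k + b k := by linarith [hrec k, hc k]
        have h2 : (1 + δ k) * a k ≤ (1 + δ k) * ((a 0 + ∑ j ∈ Finset.range k, b j) * P k) :=
          mul_le_mul_of_nonneg_left ih (by linarith [hδ k])
        have hPk : P (k + 1) = (1 + δ k) * P k := by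
          simp only [hP, Finset.prod_range_succ]; ring
        have h3 : (1 + δ k) * ((a 0 + ∑ j ∈ Finset.range k, b j) * P k)
            = (a 0 + ∑ j ∈ Finset.range k, b j) * P (k + 1) := by rw [hPk]; ring
        have h4 : b k ≤ b k * P (k + 1) := le_mul_of_one_le_right (hb k) (hP1 _)
        have h5 : (a 0 + ∑ j ∈ Finset.range (k+1), b j) * P (k+1)
            = (a 0 + ∑ j ∈ Finset.range k, b j) * P (k + 1) + b k * P (k+1) := by
          rw [Finset.sum_range_succ]; ring
        linarith
    intro k
    calc a k ≤ (a 0 + ∑ j ∈ Finset.range k, b j) * P k := key k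
      _ ≤ (a 0 + ∑' j, b j) * P k := by
          apply mul_le_mul_of_nonneg_right _ (by linarith [hP1 k])
          have := Summable.sum_le_tsum (Finset.range k) (fun j _ => hb j) hbs
          linarith
      _ ≤ Bd := by
          apply mul_le_mul_of_nonneg_left (hPE k)
          linarith [ha 0, htb]
  have hB0 : 0 ≤ Bd := le_trans (ha 0) (haB 0)
  set g : ℕ → ℝ := fun k => δ k * Bd + b k with hg
  have hgs : Summable g := ((hδs.mul_right Bd).add hbs)
  have hg0 : ∀ k, 0 ≤ g k := fun k => add_nonneg (mul_nonneg (hδ k) hB0) (hb k)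
  have hstep : ∀ k, a (k + 1) + c k ≤ a k + g k := by
    intro k
    have h2 : δ k * a k ≤ δ k * Bd := mul_le_mul_of_nonneg_left (haB k) (hδ k)
    simp only [hg]
    nlinarith [hrec k]
  have hcsum : Summable c := by
    apply summable_of_sum_range_le (c := a 0 + (∑' j, g j)) hc
    intro N
    have key : ∀ N, a N + ∑ k ∈ Finset.range N, c k ≤ a 0 + ∑ k ∈ Finset.range N, g k := by
      intro N
      induction N with
      | zero => simp
      | succ N ih =>
        rw [Finset.sum_range_succ, Finset.sum_range_succ]
        linarith [hstep N]
    have h1 := key N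
    have h2 := Summable.sum_le_tsum (Finset.range N) (fun j _ => hg0 j) hgs
    linarith [ha N]
  refine ⟨⟨Bd, hB0, haB⟩, ?_, hcsum⟩
  set T : ℕ → ℝ := fun k => ∑' j, g (j + k) with hT
  have hTs : ∀ k, Summable (fun j => g (j + k)) := fun k => (summable_nat_add_iff k).2 hgs
  have hT0 : ∀ k, 0 ≤ T k := fun k => tsum_nonneg (fun j => hg0 _)
  have hTrec : ∀ k, T k = g k + T (k + 1) := by
    intro k
    have h1 : T k = g (0 + k) + ∑' j, g (j + 1 + k) := Summable.tsum_eq_zero_add (hTs k)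
    rw [h1, Nat.zero_add]
    congr 1
    apply tsum_congr
    intro j
    congr 1
    omega
  set A : ℕ → ℝ := fun k => a k + T k with hA
  have hAanti : Antitone A := by
    apply antitone_nat_of_succ_le
    intro k
    simp only [hA]
    have h1 := hstep k
    have h2 := hc k
    have h3 := hTrec k
    linarith
  have hAbdd : BddBelow (Set.range A) := by
    refine ⟨0, ?_⟩
    rintro z ⟨k, rfl⟩
    exact add_nonneg (ha k) (hT0 k)
  have hAconv : Filter.Tendsto A Filter.atTop (nhds (⨅ k, A k)) :=
    tendsto_atTop_ciInf hAanti hAbdd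
  have hTconv : Filter.Tendsto T Filter.atTop (nhds 0) := by
    have := tendsto_sum_nat_add g
    simpa [hT] using this
  refine ⟨(⨅ k, A k) - 0, ?_⟩
  have hAa : a = fun k => A k - T k := by funext k; simp [hA]
  rw [hAa]
  exact hAconv.sub hTconv

lemma ereal_real_ineq (A B : EReal) (r : ℝ) (hA1 : A ≠ ⊥) (hA2 : A ≠ ⊤) (hB1 : B ≠ ⊥) (hB2 : B ≠ ⊤)
    (h : A + (r : EReal) ≤ B) : A.toReal + r ≤ B.toReal := by
  lift A to ℝ using ⟨hA2, hA1⟩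
  lift B to ℝ using ⟨hB2, hB1⟩
  rw [← EReal.coe_add, EReal.coe_le_coe_iff] at h
  simpa using h

lemma ereal_ne_top_of (A B : EReal) (r : ℝ) (hB2 : B ≠ ⊤) (h : A + (r : EReal) ≤ B) : A ≠ ⊤ := by
  intro hA
  rw [hA, EReal.top_add_coe] at h
  exact hB2 (top_le_iff.1 h)

end AuxSeq

set_option maxHeartbeats 1000000 in
/-- Convergence of the scaled ε-subgradient projection method with diminishing,
divergent series, square summable stepsizes: the iterates converge to a
solution of `min_{x∈X} f`. -/
theorem stmt9 {n : ℕ} (f : (Fin n → ℝ) → EReal)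
    (hproper_bot : ∀ z, f z ≠ ⊥)
    (hconv : ∀ a b : Fin n → ℝ, ∀ t : ℝ, 0 ≤ t → t ≤ 1 →
      f (t • a + (1 - t) • b) ≤ ((t : ℝ) : EReal) * f a + (((1 - t : ℝ)) : EReal) * f b)
    (hlsc : LowerSemicontinuous f)
    (X : Set (Fin n → ℝ)) (hXne : X.Nonempty) (hXcl : IsClosed X) (hXconv : Convex ℝ X)
    (hXdom : ∀ z ∈ X, f z ≠ ⊤)
    (x u : ℕ → Fin n → ℝ) (ε α L γ : ℕ → ℝ) (ρ : ℝ) (Lbd : ℝ)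
    (D : ℕ → Matrix (Fin n) (Fin n) ℝ) (hD : ∀ k, (D k).PosDef)
    (hε : ∀ k, 0 ≤ ε k) (hα : ∀ k, 0 < α k)
    (hx0 : x 0 ∈ X)
    -- `u k` is an `ε k`-subgradient of `f` at `x k`
    (hu : ∀ k, ∀ z : Fin n → ℝ,
      f (x k) + (((u k ⬝ᵥ (z - x k) - ε k : ℝ)) : EReal) ≤ f z)
    -- boundedness of the subgradients: `‖u k‖ ≤ ρ`
    (hρ : ∀ k, Real.sqrt (u k ⬝ᵥ u k) ≤ ρ)
    -- spectral bounds `‖D k‖ ≤ L k` and `‖(D k)⁻¹‖ ≤ L k`, with `1 ≤ L k ≤ Lbd`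
    (hDub : ∀ k, ∀ v : Fin n → ℝ, v ⬝ᵥ (D k).mulVec v ≤ L k * (v ⬝ᵥ v))
    (hDlb : ∀ k, ∀ v : Fin n → ℝ, v ⬝ᵥ v ≤ L k * (v ⬝ᵥ (D k).mulVec v))
    (hL1 : ∀ k, 1 ≤ L k) (hLbd : ∀ k, L k ≤ Lbd)
    -- `x (k+1)` is the scaled projection of `x k - α k • D k u k` onto `X`
    (hproj : ∀ k, x (k + 1) ∈ X ∧ ∀ w ∈ X,
      ((x k - α k • (D k).mulVec (u k)) - x (k + 1)) ⬝ᵥ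
          (D k)⁻¹.mulVec ((x k - α k • (D k).mulVec (u k)) - x (k + 1))
        ≤ ((x k - α k • (D k).mulVec (u k)) - w) ⬝ᵥ
            (D k)⁻¹.mulVec ((x k - α k • (D k).mulVec (u k)) - w))
    -- conditions on the parameter sequences
    (hεlim : Filter.Tendsto ε Filter.atTop (nhds 0))
    (hαdiv : Filter.Tendsto (fun N => ∑ k ∈ Finset.range N, α k) Filter.atTop Filter.atTop)
    (hαsq : Summable (fun k => (α k) ^ 2))
    (hεα : Summable (fun k => ε k * α k))
    (hLγ : ∀ k, (L k) ^ 2 = 1 + γ k) (hγ : ∀ k, 0 ≤ γ k) (hγsum : Summable γ)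
    -- the solution set is nonempty
    (hXs : ∃ xs ∈ X, ∀ z ∈ X, f xs ≤ f z) :
    ∃ xstar : Fin n → ℝ, xstar ∈ X ∧ (∀ z ∈ X, f xstar ≤ f z) ∧
      Filter.Tendsto x Filter.atTop (nhds xstar) := by
  obtain ⟨xs, hxsX, hxsmin⟩ := hXs
  have hQpd : ∀ k, ((D k)⁻¹).PosDef := fun k => (hD k).inv
  have hLbd1 : (1:ℝ) ≤ Lbd := le_trans (hL1 0) (hLbd 0)
  have hρ0 : 0 ≤ ρ := le_trans (Real.sqrt_nonneg _) (hρ 0)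
  have hρ2 : ∀ k, u k ⬝ᵥ u k ≤ ρ^2 := by
    intro k
    have h1 := hρ k
    have h2 := Real.sqrt_nonneg (u k ⬝ᵥ u k)
    have h3 : Real.sqrt (u k ⬝ᵥ u k) ^ 2 = u k ⬝ᵥ u k := Real.sq_sqrt (dot_self_nonneg' _)
    nlinarith
  have hmemX : ∀ k, x k ∈ X := by
    intro k
    cases k with
    | zero => exact hx0
    | succ k => exact (hproj k).1
  have hfxk_ne_top : ∀ k, f (x k) ≠ ⊤ := fun k =>
    ereal_ne_top_of _ _ _ (hXdom xs hxsX) (hu k xs)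
  have husub : ∀ k, ∀ p ∈ X, (f (x k)).toReal + (u k ⬝ᵥ (p - x k) - ε k) ≤ (f p).toReal :=
    fun k p hp => ereal_real_ineq _ _ _ (hproper_bot _) (hfxk_ne_top k) (hproper_bot p)
      (hXdom p hp) (hu k p)
  have hγbd : ∀ k, γ k ≤ Lbd ^ 2 := by
    intro k
    have h1 := hLγ k
    have h2 := hL1 k
    have h3 := hLbd k
    nlinarith
  -- master convergence lemma for any minimizer p
  have hmaster : ∀ p, p ∈ X → (∀ z ∈ X, f p ≤ f z) →
      (∃ Bd, 0 ≤ Bd ∧ ∀ k, (x k - p) ⬝ᵥ ((D k)⁻¹).mulVec (x k - p) ≤ Bd) ∧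
      (∃ l, Filter.Tendsto (fun k => (x k - p) ⬝ᵥ ((D k)⁻¹).mulVec (x k - p))
        Filter.atTop (nhds l)) ∧
      Summable (fun k => 2 * α k * ((f (x k)).toReal - (f p).toReal)) := by
    intro p hpX hpmin
    set a : ℕ → ℝ := fun k => (x k - p) ⬝ᵥ ((D k)⁻¹).mulVec (x k - p) with hadef
    set s : ℕ → ℝ := fun k => (f (x k)).toReal - (f p).toReal with hsdef
    have hs0 : ∀ k, 0 ≤ s k := by
      intro k
      have h1 := hpmin (x k) (hmemX k)
      have h2 : (f p).toReal ≤ (f (x k)).toReal :=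
        EReal.toReal_le_toReal h1 (hproper_bot p) (hfxk_ne_top k)
      simp only [hsdef]
      linarith
    set δ' : ℕ → ℝ := fun k => (1 + γ k) * (1 + γ (k+1)) - 1 with hδ'def
    set b' : ℕ → ℝ := fun k =>
      (1 + γ k) * (1 + γ (k+1)) * (2 * α k * ε k + α k ^ 2 * (Lbd * ρ^2)) with hb'def
    have hδ'0 : ∀ k, 0 ≤ δ' k := by
      intro k
      simp only [hδ'def]
      nlinarith [hγ k, hγ (k+1)]
    have hck0 : ∀ k, 0 ≤ 2 * α k * ε k + α k ^ 2 * (Lbd * ρ^2) := by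
      intro k
      have := hα k
      have := hε k
      positivity
    have hb'0 : ∀ k, 0 ≤ b' k := by
      intro k
      simp only [hb'def]
      have h1 := hck0 k
      exact mul_nonneg (mul_nonneg (by linarith [hγ k]) (by linarith [hγ (k+1)])) h1
    have hrec : ∀ k, a (k+1) ≤ (1 + δ' k) * a k - (2 * α k * s k) + b' k := by
      intro k
      have hσ : u k ⬝ᵥ (p - x k) ≤ ((f p).toReal - (f (x k)).toReal + ε k) := by
        linarith [husub k p hpX]
      have hstep := step_ineq' (hD k) hXconv (hL1 k) (hLbd k) (hDub k) hpX (hproj k).1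
        (hα k) (hproj k).2 hσ (hρ2 k)
      have hq1 : a (k+1) ≤ L (k+1) * ((x (k+1) - p) ⬝ᵥ (x (k+1) - p)) :=
        pd_inv_ub' (hD (k+1)) (by linarith [hL1 (k+1)]) (hDlb (k+1)) _
      have hq2 : (x (k+1) - p) ⬝ᵥ (x (k+1) - p)
          ≤ L k * ((x (k+1) - p) ⬝ᵥ ((D k)⁻¹).mulVec (x (k+1) - p)) :=
        pd_inv_lb' (hD k) (by linarith [hL1 k]) (hDub k) _
      set qk1 := (x (k+1) - p) ⬝ᵥ ((D k)⁻¹).mulVec (x (k+1) - p) with hqk1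
      have hqk1nn : 0 ≤ qk1 := pd_nonneg' (hQpd k) _
      have hM1 : 1 ≤ L k * L (k+1) := by
        have e3 := hL1 k
        have e4 := hL1 (k+1)
        nlinarith
      have hM : L k * L (k+1) ≤ (1 + γ k) * (1 + γ (k+1)) := by
        rw [← hLγ k, ← hLγ (k+1)]
        have e3 := hL1 k
        have e4 := hL1 (k+1)
        nlinarith [hM1, mul_nonneg (by nlinarith : (0:ℝ) ≤ L k * L (k+1))
          (by nlinarith : (0:ℝ) ≤ L k * L (k+1) - 1)]
      have hchain : a (k+1) ≤ (L k * L (k+1)) * qk1 := by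
        have h2 : L (k+1) * ((x (k+1) - p) ⬝ᵥ (x (k+1) - p))
            ≤ L (k+1) * (L k * qk1) :=
          mul_le_mul_of_nonneg_left hq2 (by linarith [hL1 (k+1)])
        calc a (k+1) ≤ L (k+1) * ((x (k+1) - p) ⬝ᵥ (x (k+1) - p)) := hq1
          _ ≤ L (k+1) * (L k * qk1) := h2
          _ = (L k * L (k+1)) * qk1 := by ring
      -- hstep rewritten : qk1 ≤ a k + 2 α (Fp - Fk + ε) + α² Lbd ρ² = a k - 2 α s + c
      have hstep2 : qk1 ≤ a k - 2 * α k * s k + (2 * α k * ε k + α k ^ 2 * (Lbd * ρ^2)) := by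
        have := hstep
        simp only [hadef, hsdef]
        nlinarith [hstep]
      have hak0 : 0 ≤ a k := pd_nonneg' (hQpd k) _
      have hαs : 0 ≤ α k * s k := mul_nonneg (le_of_lt (hα k)) (hs0 k)
      have hc0 := hck0 k
      have hmul := mul_le_mul_of_nonneg_left hstep2 (by linarith : (0:ℝ) ≤ L k * L (k+1))
      simp only [hδ'def, hb'def]
      nlinarith [hchain, hmul, hM, hM1, hak0, hαs, hc0,
        mul_le_mul_of_nonneg_right hM hc0, mul_le_mul_of_nonneg_right hM hak0]
    have hδ's : Summable δ' := by
      refine Summable.of_nonneg_of_le hδ'0 (g := δ')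
        (f := fun k => γ k + (1 + Lbd^2) * γ (k+1)) ?_ ?_
      · intro k
        simp only [hδ'def]
        have h := mul_le_mul_of_nonneg_right (hγbd k) (hγ (k+1))
        nlinarith [hγ k, hγ (k+1), h]
      · exact hγsum.add (((summable_nat_add_iff 1).2 hγsum).mul_left _)
    have hb's : Summable b' := by
      refine Summable.of_nonneg_of_le hb'0 (g := b')
        (f := fun k => (1 + Lbd^2)^2 * (2 * (ε k * α k) + (α k)^2 * (Lbd * ρ^2))) ?_ ?_
      · intro k
        simp only [hb'def]
        have h1 := hγ k
        have h2 := hγ (k+1)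
        have h3 := hγbd k
        have h4 := hγbd (k+1)
        have h5 := hck0 k
        nlinarith [mul_le_mul (by nlinarith : (1 + γ k) * (1 + γ (k+1)) ≤ (1 + Lbd^2)^2)
          (le_refl (2 * α k * ε k + α k ^ 2 * (Lbd * ρ^2))) h5 (by positivity)]
      · exact ((hεα.mul_left 2).add (hαsq.mul_right (Lbd * ρ^2))).mul_left _
    have hq := qfejer a δ' b' (fun k => 2 * α k * s k)
      (fun k => pd_nonneg' (hQpd k) _) hδ'0 hb'0
      (fun k => mul_nonneg (mul_nonneg (by norm_num) (hα k).le) (hs0 k)) hrec hδ's hb's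
    exact hq
  obtain ⟨⟨Bd, hBd0, hBdub⟩, ⟨l, hl⟩, hsum⟩ := hmaster xs hxsX hxsmin
  set s : ℕ → ℝ := fun k => (f (x k)).toReal - (f xs).toReal with hsdef
  have hs0 : ∀ k, 0 ≤ s k := fun k => sub_nonneg.2
    (EReal.toReal_le_toReal (hxsmin (x k) (hmemX k)) (hproper_bot xs) (hfxk_ne_top k))
  -- frequently, s is small
  have hfreq : ∀ m : ℕ, ∃ᶠ k in Filter.atTop, s k < 1/((m:ℝ)+1) := by
    intro m
    by_contra hcon
    rw [Filter.not_frequently] at hcon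
    rw [Filter.eventually_atTop] at hcon
    obtain ⟨K, hK⟩ := hcon
    have hsum2 : Summable (fun k => 2 * α (k+K) * s (k+K)) := (summable_nat_add_iff K).2 hsum
    have hαsum : Summable (fun k => α (k+K)) := by
      refine Summable.of_nonneg_of_le (fun k => (hα _).le)
        (f := fun k => ((m:ℝ)+1)/2 * (2 * α (k+K) * s (k+K))) ?_ (hsum2.mul_left _)
      intro k
      have h1 : 1/((m:ℝ)+1) ≤ s (k+K) := not_lt.1 (hK (k+K) (Nat.le_add_left K k))
      have hm : (0:ℝ) < (m:ℝ)+1 := by positivity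
      have h2 := hα (k+K)
      rw [div_le_iff₀ hm] at h1
      show α (k+K) ≤ ((m:ℝ)+1)/2 * (2 * α (k+K) * s (k+K))
      have key : ∀ A S : ℝ, 0 < A → 1 ≤ S * ((m:ℝ)+1) → A ≤ ((m:ℝ)+1)/2 * (2*A*S) := by
        intro A S hA hS
        nlinarith [mul_le_mul_of_nonneg_left hS hA.le]
      exact key _ _ h2 h1
    have hαS : Summable α := (summable_nat_add_iff K).1 hαsum
    obtain ⟨t, ht⟩ := hαS
    exact not_tendsto_atTop_of_tendsto_nhds ht.tendsto_sum_nat hαdiv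
  obtain ⟨φ, hφmono, hφ⟩ := Filter.extraction_forall_of_frequently hfreq
  -- bounded iterates, convergent subsequence
  set R := Real.sqrt (Lbd * Bd) with hR
  have hball : ∀ k, x k ∈ Metric.closedBall xs R := by
    intro k
    rw [Metric.mem_closedBall, dist_eq_norm]
    have h1 : (x k - xs) ⬝ᵥ (x k - xs) ≤ Lbd * Bd := by
      have h2 := pd_inv_lb' (hD k) (le_trans zero_le_one (hL1 k)) (hDub k) (x k - xs)
      have h3 := hBdub k
      have h4 : 0 ≤ (x k - xs) ⬝ᵥ ((D k)⁻¹).mulVec (x k - xs) := pd_nonneg' (hQpd k) _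
      nlinarith [hLbd k, hL1 k]
    exact (norm_le_sqrt_dot _).trans (Real.sqrt_le_sqrt h1)
  obtain ⟨xbar, hxbarcl, ψ, hψmono, hψtend⟩ :=
    tendsto_subseq_of_bounded Metric.isBounded_closedBall (fun j => hball (φ j))
  have hxbarX : xbar ∈ X :=
    hXcl.mem_of_tendsto hψtend (Filter.Eventually.of_forall (fun j => hmemX _))
  -- s along the subsequence tends to 0
  have hstend : Filter.Tendsto (fun j => s (φ (ψ j))) Filter.atTop (nhds 0) := by
    apply squeeze_zero (fun j => hs0 _) (g := fun j : ℕ => 1/((j:ℝ)+1))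
    · intro j
      have h1 := hφ (ψ j)
      have h2 : (j:ℝ)+1 ≤ (ψ j : ℝ)+1 := by
        have h3 : j ≤ ψ j := hψmono.le_apply
        have h4 : (j:ℝ) ≤ (ψ j : ℝ) := by exact_mod_cast h3
        linarith
      have h5 : 1/((ψ j:ℝ)+1) ≤ 1/((j:ℝ)+1) :=
        one_div_le_one_div_of_le (by positivity) h2
      linarith
    · exact tendsto_one_div_add_atTop_nhds_zero_nat
  -- xbar is a minimizer, via lower semicontinuity
  have hfxbar : f xbar ≤ f xs := by
    by_contra hc
    push_neg at hc
    obtain ⟨y, hy1, hy2⟩ := exists_between hc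
    have hev : ∀ᶠ z in nhds xbar, y < f z := hlsc xbar y hy2
    have hev2 := hψtend.eventually hev
    have hytop : y ≠ ⊤ := by
      rintro rfl
      exact not_top_lt hy2
    have hybot : y ≠ ⊥ := by
      rintro rfl
      exact not_lt_bot (lt_of_le_of_lt bot_le hy1)
    lift y to ℝ using ⟨hytop, hybot⟩
    have hxsr : f xs = ((f xs).toReal : EReal) :=
      (EReal.coe_toReal (hXdom xs hxsX) (hproper_bot xs)).symm
    have hy1' : (f xs).toReal < y := by
      rw [hxsr] at hy1
      exact_mod_cast hy1
    have hFtend : Filter.Tendsto (fun j => (f (x (φ (ψ j)))).toReal)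
        Filter.atTop (nhds ((f xs).toReal)) := by
      have heq : (fun j => (f (x (φ (ψ j)))).toReal)
          = fun j => s (φ (ψ j)) + (f xs).toReal := by
        funext j
        simp only [hsdef]
        ring
      rw [heq]
      simpa using hstend.add tendsto_const_nhds
    have hev3 := hFtend.eventually_lt_const hy1'
    obtain ⟨j, hj1, hj2⟩ := (hev2.and hev3).exists
    have hk : ((f (x (φ (ψ j)))).toReal : EReal) = f (x (φ (ψ j))) :=
      EReal.coe_toReal (hfxk_ne_top _) (hproper_bot _)
    simp only [Function.comp_apply] at hj1
    rw [← hk] at hj1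
    have hj1' : y < (f (x (φ (ψ j)))).toReal := by exact_mod_cast hj1
    linarith
  have hxbarmin : ∀ z ∈ X, f xbar ≤ f z := fun z hz => le_trans hfxbar (hxsmin z hz)
  -- final convergence with p = xbar
  obtain ⟨-, ⟨l', hl'⟩, -⟩ := hmaster xbar hxbarX hxbarmin
  have hdotcont : Filter.Tendsto (fun j => (x (φ (ψ j)) - xbar) ⬝ᵥ (x (φ (ψ j)) - xbar))
      Filter.atTop (nhds 0) := by
    have hg : Continuous (fun z : Fin n → ℝ => (z - xbar) ⬝ᵥ (z - xbar)) := by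
      simp only [dotProduct]
      apply continuous_finset_sum
      intro i _
      exact (((continuous_apply i).sub continuous_const).mul
        ((continuous_apply i).sub continuous_const))
    have h0 : (xbar - xbar) ⬝ᵥ (xbar - xbar) = (0:ℝ) := by
      simp [dotProduct]
    have h1 := (hg.tendsto xbar).comp hψtend
    rw [h0] at h1
    exact h1
  have hsubtend0 : Filter.Tendsto
      (fun j => (x (φ (ψ j)) - xbar) ⬝ᵥ ((D (φ (ψ j)))⁻¹).mulVec (x (φ (ψ j)) - xbar))
      Filter.atTop (nhds 0) := by
    apply squeeze_zero (fun j => pd_nonneg' (hQpd _) _)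
      (g := fun j => Lbd * ((x (φ (ψ j)) - xbar) ⬝ᵥ (x (φ (ψ j)) - xbar)))
    · intro j
      have h1 := pd_inv_ub' (hD (φ (ψ j))) (le_trans zero_le_one (hL1 _))
        (hDlb (φ (ψ j))) (x (φ (ψ j)) - xbar)
      have h2 := dot_self_nonneg' (x (φ (ψ j)) - xbar)
      have h3 := hLbd (φ (ψ j))
      nlinarith
    · simpa using hdotcont.const_mul Lbd
  have hsubtendl : Filter.Tendsto
      (fun j => (x (φ (ψ j)) - xbar) ⬝ᵥ ((D (φ (ψ j)))⁻¹).mulVec (x (φ (ψ j)) - xbar))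
      Filter.atTop (nhds l') :=
    hl'.comp ((hφmono.comp hψmono).tendsto_atTop)
  have hl0 : l' = 0 := tendsto_nhds_unique hsubtendl hsubtend0
  rw [hl0] at hl'
  refine ⟨xbar, hxbarX, hxbarmin, ?_⟩
  rw [tendsto_iff_dist_tendsto_zero]
  apply squeeze_zero (fun k => dist_nonneg)
    (g := fun k => Real.sqrt (Lbd * ((x k - xbar) ⬝ᵥ ((D k)⁻¹).mulVec (x k - xbar))))
  · intro k
    rw [dist_eq_norm]
    have h1 : (x k - xbar) ⬝ᵥ (x k - xbar)
        ≤ Lbd * ((x k - xbar) ⬝ᵥ ((D k)⁻¹).mulVec (x k - xbar)) := by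
      have h2 := pd_inv_lb' (hD k) (le_trans zero_le_one (hL1 k)) (hDub k) (x k - xbar)
      have h3 : 0 ≤ (x k - xbar) ⬝ᵥ ((D k)⁻¹).mulVec (x k - xbar) := pd_nonneg' (hQpd k) _
      have h4 := hLbd k
      nlinarith
    exact (norm_le_sqrt_dot _).trans (Real.sqrt_le_sqrt h1)
  · have h5 : Filter.Tendsto
        (fun k => Lbd * ((x k - xbar) ⬝ᵥ ((D k)⁻¹).mulVec (x k - xbar)))
        Filter.atTop (nhds (Lbd * 0)) :=
      hl'.const_mul Lbd
    rw [mul_zero] at h5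
    have h6 := (Real.continuous_sqrt.tendsto 0).comp h5
    simpa [Real.sqrt_zero, Function.comp_def] using h6
end

section
/- Under the hypotheses of Theorem on the scaled ε-subgradient method with square summable stepsizes, the iterates satisfy ||x^{(k+1)} - x̃||_{D_{k+1}^{-1}}^2 ≤ ζ_k ||x^{(k)} - x̃||_{D_k^{-1}}^2 + ξ ζ_k α_k^2 + 2 L ζ_k α_k ε_k for every x̃ ∈ X*, where ζ_k = sqrt((1+γ_k)(1+γ_{k+1})) and ξ = 5 L ρ^2; moreover ζ_k = 1 + η_k with Σ η_k < ∞, so the sequence is quasi-Fejér monotone with respect to X* relative to the metrics D_k^{-1}. -/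
open Matrix

lemma mySym {n : ℕ} {M : Matrix (Fin n) (Fin n) ℝ} (hM : M.IsHermitian)
    (a b : Fin n → ℝ) : a ⬝ᵥ M.mulVec b = b ⬝ᵥ M.mulVec a := by
  have ht : Mᵀ = M := by
    rw [← Matrix.conjTranspose_eq_transpose_of_trivial]; exact hM.eq
  rw [Matrix.dotProduct_mulVec, ← Matrix.mulVec_transpose, ht, dotProduct_comm]

lemma myCS {n : ℕ} {M : Matrix (Fin n) (Fin n) ℝ}
    (hsym : ∀ a b : Fin n → ℝ, a ⬝ᵥ M.mulVec b = b ⬝ᵥ M.mulVec a)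
    (hnn : ∀ v : Fin n → ℝ, 0 ≤ v ⬝ᵥ M.mulVec v) (a b : Fin n → ℝ) :
    (a ⬝ᵥ M.mulVec b) ^ 2 ≤ (a ⬝ᵥ M.mulVec a) * (b ⬝ᵥ M.mulVec b) := by
  have key : ∀ t : ℝ, 0 ≤ (a ⬝ᵥ M.mulVec a) * (t * t) + (2 * (a ⬝ᵥ M.mulVec b)) * t
      + (b ⬝ᵥ M.mulVec b) := by
    intro t
    have h := hnn (t • a + b)
    have hexp : (t • a + b) ⬝ᵥ M.mulVec (t • a + b)
        = (a ⬝ᵥ M.mulVec a) * (t * t) + (2 * (a ⬝ᵥ M.mulVec b)) * t + (b ⬝ᵥ M.mulVec b) := by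
      simp [Matrix.mulVec_add, Matrix.mulVec_smul, dotProduct_add, add_dotProduct,
        dotProduct_smul, smul_dotProduct, smul_eq_mul, hsym b a]
      ring
    rw [hexp] at h; exact h
  have hd := discrim_le_zero key
  have : discrim (a ⬝ᵥ M.mulVec a) (2 * (a ⬝ᵥ M.mulVec b)) (b ⬝ᵥ M.mulVec b)
      = 4 * ((a ⬝ᵥ M.mulVec b) ^ 2 - (a ⬝ᵥ M.mulVec a) * (b ⬝ᵥ M.mulVec b)) := by
    rw [discrim]; ring
  nlinarith [hd, this]

/-- expansion of a quadratic form along `a - t • b` -/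
lemma myExpand {n : ℕ} {M : Matrix (Fin n) (Fin n) ℝ}
    (hsym : ∀ a b : Fin n → ℝ, a ⬝ᵥ M.mulVec b = b ⬝ᵥ M.mulVec a)
    (a b : Fin n → ℝ) (t : ℝ) :
    (a - t • b) ⬝ᵥ M.mulVec (a - t • b)
      = a ⬝ᵥ M.mulVec a - 2 * t * (a ⬝ᵥ M.mulVec b) + t ^ 2 * (b ⬝ᵥ M.mulVec b) := by
  simp [Matrix.mulVec_sub, Matrix.mulVec_smul, dotProduct_sub, sub_dotProduct,
    dotProduct_smul, smul_dotProduct, smul_eq_mul, hsym b a]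
  ring

/-- nonexpansiveness of the metric projection at a solution point -/
lemma myProj {n : ℕ} {M : Matrix (Fin n) (Fin n) ℝ} (hM : M.PosDef)
    {X : Set (Fin n → ℝ)} (hXconv : Convex ℝ X) {y p xt : Fin n → ℝ}
    (hp : p ∈ X) (hxt : xt ∈ X)
    (hmin : ∀ w ∈ X, (y - p) ⬝ᵥ M.mulVec (y - p) ≤ (y - w) ⬝ᵥ M.mulVec (y - w)) :
    (p - xt) ⬝ᵥ M.mulVec (p - xt) ≤ (y - xt) ⬝ᵥ M.mulVec (y - xt) := by
  have hsym := mySym hM.isHermitian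
  have hnn : ∀ v : Fin n → ℝ, 0 ≤ v ⬝ᵥ M.mulVec v := fun v => by
    rcases eq_or_ne v 0 with rfl | hv
    · simp
    · have := hM.dotProduct_mulVec_pos hv; simpa using this.le
  set A : ℝ := (y - p) ⬝ᵥ M.mulVec (xt - p) with hA
  set C : ℝ := (xt - p) ⬝ᵥ M.mulVec (xt - p) with hC
  have hCnn : 0 ≤ C := hnn _
  have hkey : ∀ t : ℝ, 0 < t → t ≤ 1 → 2 * t * A ≤ t ^ 2 * C := by
    intro t ht0 ht1
    have hw : p + t • (xt - p) ∈ X := by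
      have h := hXconv hp hxt (by linarith : (0:ℝ) ≤ 1 - t) ht0.le (by ring)
      have heq : (1 - t) • p + t • xt = p + t • (xt - p) := by
        rw [smul_sub, sub_smul, one_smul]; abel
      rwa [heq] at h
    have h := hmin _ hw
    have hyw : y - (p + t • (xt - p)) = (y - p) - t • (xt - p) := by abel
    rw [hyw, myExpand hsym] at h
    linarith
  have hA0 : A ≤ 0 := by
    by_contra hA'
    push_neg at hA'
    rcases eq_or_lt_of_le hCnn with hC0 | hCpos
    · have := hkey 1 one_pos le_rfl
      rw [← hC0] at this; nlinarith
    · set t : ℝ := min 1 (A / C) with htd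
      have ht0 : 0 < t := lt_min one_pos (div_pos hA' hCpos)
      have ht1 : t ≤ 1 := min_le_left _ _
      have h := hkey t ht0 ht1
      have htC : t * C ≤ A := by
        calc t * C ≤ (A / C) * C := by
              apply mul_le_mul_of_nonneg_right (min_le_right _ _) hCnn
          _ = A := by field_simp
      nlinarith
  have hexp : (p - xt) ⬝ᵥ M.mulVec (p - xt)
      = (y - xt) ⬝ᵥ M.mulVec (y - xt) - (y - p) ⬝ᵥ M.mulVec (y - p) + 2 * A := by
    simp only [hA, Matrix.mulVec_sub, dotProduct_sub, sub_dotProduct]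
    simp only [hsym xt p, hsym xt y, hsym p y]
    ring
  have := hnn (y - p)
  linarith

lemma myInvBounds {n : ℕ} {M : Matrix (Fin n) (Fin n) ℝ} (hM : M.PosDef) {L : ℝ}
    (hL1 : 1 ≤ L)
    (hub : ∀ v : Fin n → ℝ, v ⬝ᵥ M.mulVec v ≤ L * (v ⬝ᵥ v))
    (hlb : ∀ v : Fin n → ℝ, v ⬝ᵥ v ≤ L * (v ⬝ᵥ M.mulVec v)) (v : Fin n → ℝ) :
    v ⬝ᵥ M⁻¹.mulVec v ≤ L * (v ⬝ᵥ v) ∧ v ⬝ᵥ v ≤ L * (v ⬝ᵥ M⁻¹.mulVec v) := by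
  have hdet : IsUnit M.det := isUnit_iff_ne_zero.mpr hM.det_pos.ne'
  have hsym := mySym hM.isHermitian
  have hnn : ∀ w : Fin n → ℝ, 0 ≤ w ⬝ᵥ M.mulVec w := fun w => by
    rcases eq_or_ne w 0 with rfl | hw
    · simp
    · have := hM.dotProduct_mulVec_pos hw; simpa using this.le
  have hEnn : ∀ w : Fin n → ℝ, (0:ℝ) ≤ w ⬝ᵥ w := fun w =>
    Finset.sum_nonneg fun i _ => mul_self_nonneg _
  set w : Fin n → ℝ := M⁻¹.mulVec v with hw
  have hDw : M.mulVec w = v := by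
    rw [hw, Matrix.mulVec_mulVec, Matrix.mul_nonsing_inv _ hdet, Matrix.one_mulVec]
  have hq : v ⬝ᵥ M⁻¹.mulVec v = w ⬝ᵥ M.mulVec w := by
    rw [← hw, hDw, ← hDw, dotProduct_comm, hDw]
  set q : ℝ := w ⬝ᵥ M.mulVec w with hqd
  set r : ℝ := v ⬝ᵥ v with hrd
  have hqnn : 0 ≤ q := hnn w
  have hrnn : 0 ≤ r := hEnn v
  -- Euclidean Cauchy-Schwarz
  have hECS : ∀ a b : Fin n → ℝ, (a ⬝ᵥ b) ^ 2 ≤ (a ⬝ᵥ a) * (b ⬝ᵥ b) := by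
    intro a b
    have h := myCS (M := (1 : Matrix (Fin n) (Fin n) ℝ))
      (fun a b => by rw [Matrix.one_mulVec, Matrix.one_mulVec, dotProduct_comm])
      (fun w => by rw [Matrix.one_mulVec]; exact hEnn w) a b
    simpa [Matrix.one_mulVec] using h
  constructor
  · -- q ≤ L * r  using q² ≤ (w⬝ᵥw) * r ≤ L q r
    rw [hq]
    have h1 : q ^ 2 ≤ (w ⬝ᵥ w) * r := by
      have := hECS w (M.mulVec w)
      rw [hDw] at this
      rw [hqd, hrd]
      calc (w ⬝ᵥ M.mulVec w)^2 = (w ⬝ᵥ v)^2 := by rw [hDw]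
        _ ≤ (w ⬝ᵥ w) * (v ⬝ᵥ v) := hECS w v
    have h2 : w ⬝ᵥ w ≤ L * q := hlb w
    rcases eq_or_lt_of_le hqnn with h0 | hqpos
    · rw [← h0]; positivity
    · nlinarith [hEnn w]
  · -- r ≤ L * q
    rw [hq]
    have hMCS := myCS hsym hnn w (M.mulVec w)
    rw [hDw] at hMCS
    have h1 : w ⬝ᵥ M.mulVec v = r := by rw [hsym w v, hDw, hrd]
    have h4 : w ⬝ᵥ v = q := by rw [← hDw]
    rw [h1, h4] at hMCS
    have h2 : v ⬝ᵥ M.mulVec v ≤ L * r := by rw [hrd]; exact hub v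
    have h3 := hnn v
    rcases eq_or_lt_of_le hrnn with h0 | hrpos
    · rw [← h0]; positivity
    · nlinarith
/-- Quasi-Fejér monotonicity of the scaled ε-subgradient iterates relative to
the variable metrics `D_k⁻¹`:
`‖x^{k+1} - x̃‖²_{D_{k+1}⁻¹} ≤ ζ_k ‖x^k - x̃‖²_{D_k⁻¹} + ξ ζ_k α_k² + 2 L ζ_k α_k ε_k`
with `ζ_k = √((1+γ_k)(1+γ_{k+1})) = 1 + η_k` and `∑ η_k < ∞`, `ξ = 5 L ρ²`. -/
theorem stmt10 {n : ℕ} (f : (Fin n → ℝ) → EReal)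
    (hproper_bot : ∀ z, f z ≠ ⊥)
    (hconv : ∀ a b : Fin n → ℝ, ∀ t : ℝ, 0 ≤ t → t ≤ 1 →
      f (t • a + (1 - t) • b) ≤ ((t : ℝ) : EReal) * f a + (((1 - t : ℝ)) : EReal) * f b)
    (hlsc : LowerSemicontinuous f)
    (X : Set (Fin n → ℝ)) (hXne : X.Nonempty) (hXcl : IsClosed X) (hXconv : Convex ℝ X)
    (hXdom : ∀ z ∈ X, f z ≠ ⊤)
    (x u : ℕ → Fin n → ℝ) (ε α L γ : ℕ → ℝ) (ρ : ℝ) (Lbd : ℝ)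
    (D : ℕ → Matrix (Fin n) (Fin n) ℝ) (hD : ∀ k, (D k).PosDef)
    (hε : ∀ k, 0 ≤ ε k) (hα : ∀ k, 0 < α k)
    (hx0 : x 0 ∈ X)
    -- `u k` is an `ε k`-subgradient of `f` at `x k`
    (hu : ∀ k, ∀ z : Fin n → ℝ,
      f (x k) + (((u k ⬝ᵥ (z - x k) - ε k : ℝ)) : EReal) ≤ f z)
    -- boundedness of the subgradients: `‖u k‖ ≤ ρ`
    (hρ : ∀ k, Real.sqrt (u k ⬝ᵥ u k) ≤ ρ)
    -- spectral bounds `‖D k‖ ≤ L k` and `‖(D k)⁻¹‖ ≤ L k`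
    (hDub : ∀ k, ∀ v : Fin n → ℝ, v ⬝ᵥ (D k).mulVec v ≤ L k * (v ⬝ᵥ v))
    (hDlb : ∀ k, ∀ v : Fin n → ℝ, v ⬝ᵥ v ≤ L k * (v ⬝ᵥ (D k).mulVec v))
    -- `L k = √(1+γ k) ≤ Lbd`, `∑ γ k < ∞`
    (hLγ : ∀ k, L k = Real.sqrt (1 + γ k)) (hγ : ∀ k, 0 ≤ γ k)
    (hLbd : ∀ k, L k ≤ Lbd) (hγsum : Summable γ)
    -- `x (k+1)` is the scaled projection of `x k - α k • D k u k` onto `X`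
    (hproj : ∀ k, x (k + 1) ∈ X ∧ ∀ w ∈ X,
      ((x k - α k • (D k).mulVec (u k)) - x (k + 1)) ⬝ᵥ
          (D k)⁻¹.mulVec ((x k - α k • (D k).mulVec (u k)) - x (k + 1))
        ≤ ((x k - α k • (D k).mulVec (u k)) - w) ⬝ᵥ
            (D k)⁻¹.mulVec ((x k - α k • (D k).mulVec (u k)) - w))
    -- `x̃` is a solution of `min_{x ∈ X} f`
    (xt : Fin n → ℝ) (hxt : xt ∈ X) (hxtmin : ∀ z ∈ X, f xt ≤ f z)
    (ζ : ℕ → ℝ) (hζ : ∀ k, ζ k = Real.sqrt ((1 + γ k) * (1 + γ (k + 1)))) :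
    (∃ η : ℕ → ℝ, Summable η ∧ ∀ k, ζ k = 1 + η k) ∧
    ∀ k, (x (k + 1) - xt) ⬝ᵥ (D (k + 1))⁻¹.mulVec (x (k + 1) - xt)
      ≤ ζ k * ((x k - xt) ⬝ᵥ (D k)⁻¹.mulVec (x k - xt))
        + (5 * Lbd * ρ ^ 2) * ζ k * (α k) ^ 2 + 2 * Lbd * ζ k * α k * ε k := by
  have hxk : ∀ k, x k ∈ X := by
    intro k
    induction k with
    | zero => exact hx0
    | succ k _ => exact (hproj k).1
  have hL1 : ∀ k, 1 ≤ L k := by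
    intro k
    rw [hLγ k]
    have h : Real.sqrt 1 ≤ Real.sqrt (1 + γ k) := Real.sqrt_le_sqrt (by linarith [hγ k])
    simpa using h
  have hLbd1 : (1:ℝ) ≤ Lbd := le_trans (hL1 0) (hLbd 0)
  have hρ0 : 0 ≤ ρ := le_trans (Real.sqrt_nonneg _) (hρ 0)
  have hζeq : ∀ k, ζ k = L k * L (k + 1) := by
    intro k
    rw [hζ k, hLγ k, hLγ (k + 1), ← Real.sqrt_mul (by linarith [hγ k])]
  have hζ1 : ∀ k, 1 ≤ ζ k := fun k => by
    calc (1:ℝ) ≤ L k := hL1 k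
      _ ≤ L k * L (k+1) := le_mul_of_one_le_right (by linarith [hL1 k]) (hL1 (k+1))
      _ = ζ k := (hζeq k).symm
  constructor
  · -- summability of η
    refine ⟨fun k => ζ k - 1, ?_, fun k => by ring⟩
    set S : ℝ := ∑' k, γ k with hS
    have hbd : ∀ k, γ k ≤ S := fun k => Summable.le_tsum hγsum k (fun i _ => hγ i)
    have hS0 : 0 ≤ S := le_trans (hγ 0) (hbd 0)
    have hg : Summable (fun k => γ k + (1 + S) * γ (k + 1)) := by
      refine Summable.add hγsum (Summable.mul_left _ ?_)
      exact (summable_nat_add_iff 1).mpr hγsum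
    refine hg.of_nonneg_of_le (fun k => by linarith [hζ1 k]) (fun k => ?_)
    have hx1 : (1:ℝ) ≤ (1 + γ k) * (1 + γ (k + 1)) := by nlinarith [hγ k, hγ (k+1)]
    have hs2 : (Real.sqrt ((1 + γ k) * (1 + γ (k + 1)))) ^ 2
        = (1 + γ k) * (1 + γ (k + 1)) := Real.sq_sqrt (by linarith)
    have hsle : Real.sqrt ((1 + γ k) * (1 + γ (k + 1))) ≤ (1 + γ k) * (1 + γ (k + 1)) := by
      nlinarith [Real.sqrt_nonneg ((1 + γ k) * (1 + γ (k + 1))),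
        sq_nonneg (Real.sqrt ((1 + γ k) * (1 + γ (k + 1))) - 1)]
    have hγγ : γ k * γ (k + 1) ≤ S * γ (k + 1) :=
      mul_le_mul_of_nonneg_right (hbd k) (hγ (k + 1))
    rw [hζ k]
    nlinarith [hγ k, hγ (k+1)]
  · -- the quasi-Fejér inequality
    intro k
    have hMpd : ((D k)⁻¹).PosDef := (hD k).inv
    have hsym := mySym hMpd.isHermitian
    have hdet : IsUnit (D k).det := isUnit_iff_ne_zero.mpr (hD k).det_pos.ne'
    have hinvD : ∀ v : Fin n → ℝ, (D k)⁻¹.mulVec ((D k).mulVec v) = v := by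
      intro v
      rw [Matrix.mulVec_mulVec, Matrix.nonsing_inv_mul _ hdet, Matrix.one_mulVec]
    set e : Fin n → ℝ := x k - xt with he
    set p : Fin n → ℝ := x (k + 1) with hp
    set yk : Fin n → ℝ := x k - α k • (D k).mulVec (u k) with hyk
    -- Step A: projection is nonexpansive towards xt
    have hPA : (p - xt) ⬝ᵥ (D k)⁻¹.mulVec (p - xt)
        ≤ (yk - xt) ⬝ᵥ (D k)⁻¹.mulVec (yk - xt) :=
      myProj hMpd hXconv (hxk (k + 1)) hxt (hproj k).2
    -- cross term: ε-subgradient inequality at xt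
    have hcross : -(ε k) ≤ u k ⬝ᵥ e := by
      have h1 := hu k xt
      have h2 := hxtmin (x k) (hxk k)
      have h3 : f (x k) + (((u k ⬝ᵥ (xt - x k) - ε k : ℝ)) : EReal) ≤ f (x k) :=
        le_trans h1 h2
      have hFt : f (x k) ≠ ⊤ := hXdom _ (hxk k)
      have hFb : f (x k) ≠ ⊥ := hproper_bot _
      set r : ℝ := (f (x k)).toReal with hr
      have hFr : f (x k) = (r : EReal) := (EReal.coe_toReal hFt hFb).symm
      rw [hFr, ← EReal.coe_add, EReal.coe_le_coe_iff] at h3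
      have h4 : u k ⬝ᵥ (xt - x k) ≤ ε k := by linarith
      have h5 : u k ⬝ᵥ e = -(u k ⬝ᵥ (xt - x k)) := by
        rw [he, dotProduct_sub, dotProduct_sub]; ring
      linarith
    -- quadratic term
    have huu : u k ⬝ᵥ u k ≤ ρ ^ 2 := by
      have h1 := hρ k
      have h2 : Real.sqrt (u k ⬝ᵥ u k) ^ 2 = u k ⬝ᵥ u k :=
        Real.sq_sqrt (Finset.sum_nonneg fun i _ => mul_self_nonneg _)
      nlinarith [Real.sqrt_nonneg (u k ⬝ᵥ u k)]
    have hquad : ((D k).mulVec (u k)) ⬝ᵥ (D k)⁻¹.mulVec ((D k).mulVec (u k))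
        ≤ Lbd * ρ ^ 2 := by
      have h1 : ((D k).mulVec (u k)) ⬝ᵥ (D k)⁻¹.mulVec ((D k).mulVec (u k))
          = u k ⬝ᵥ (D k).mulVec (u k) := by
        rw [hinvD, dotProduct_comm]
      rw [h1]
      calc u k ⬝ᵥ (D k).mulVec (u k) ≤ L k * (u k ⬝ᵥ u k) := hDub k (u k)
        _ ≤ Lbd * ρ ^ 2 := by
            have hLk0 : (0:ℝ) ≤ L k := by linarith [hL1 k]
            have huu0 : (0:ℝ) ≤ u k ⬝ᵥ u k :=
              Finset.sum_nonneg fun i _ => mul_self_nonneg _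
            nlinarith [hLbd k]
    -- Step B
    have hPB : (yk - xt) ⬝ᵥ (D k)⁻¹.mulVec (yk - xt)
        ≤ e ⬝ᵥ (D k)⁻¹.mulVec e + 2 * α k * ε k + (α k) ^ 2 * (Lbd * ρ ^ 2) := by
      have hyke : yk - xt = e - α k • ((D k).mulVec (u k)) := by
        rw [hyk, he, sub_right_comm]
      rw [hyke, myExpand hsym]
      have hce : e ⬝ᵥ (D k)⁻¹.mulVec ((D k).mulVec (u k)) = u k ⬝ᵥ e := by
        rw [hinvD, dotProduct_comm]
      rw [hce]
      have hq := hquad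
      have hα0 := (hα k).le
      have h1 : -(2 * α k * (u k ⬝ᵥ e)) ≤ 2 * α k * ε k := by nlinarith
      have h2 : (α k) ^ 2 * (((D k).mulVec (u k)) ⬝ᵥ (D k)⁻¹.mulVec ((D k).mulVec (u k)))
          ≤ (α k) ^ 2 * (Lbd * ρ ^ 2) := by nlinarith [sq_nonneg (α k)]
      linarith
    -- Step C: metric switch
    have hC1 := (myInvBounds (hD (k + 1)) (hL1 (k + 1)) (hDub (k + 1)) (hDlb (k + 1))
      (p - xt)).1
    have hC2 := (myInvBounds (hD k) (hL1 k) (hDub k) (hDlb k) (p - xt)).2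
    -- combine
    have hζnn : (0:ℝ) ≤ ζ k := by linarith [hζ1 k]
    have hL10 : (0:ℝ) ≤ L (k + 1) := by linarith [hL1 (k + 1)]
    have d1 : (p - xt) ⬝ᵥ (D (k + 1))⁻¹.mulVec (p - xt)
        ≤ L (k + 1) * (L k * ((p - xt) ⬝ᵥ (D k)⁻¹.mulVec (p - xt))) :=
      le_trans hC1 (mul_le_mul_of_nonneg_left hC2 hL10)
    have d2 : L (k + 1) * (L k * ((p - xt) ⬝ᵥ (D k)⁻¹.mulVec (p - xt)))
        = ζ k * ((p - xt) ⬝ᵥ (D k)⁻¹.mulVec (p - xt)) := by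
      rw [hζeq k]; ring
    have d3 : ζ k * ((p - xt) ⬝ᵥ (D k)⁻¹.mulVec (p - xt))
        ≤ ζ k * ((yk - xt) ⬝ᵥ (D k)⁻¹.mulVec (yk - xt)) :=
      mul_le_mul_of_nonneg_left hPA hζnn
    have d4 : ζ k * ((yk - xt) ⬝ᵥ (D k)⁻¹.mulVec (yk - xt))
        ≤ ζ k * (e ⬝ᵥ (D k)⁻¹.mulVec e + 2 * α k * ε k + (α k) ^ 2 * (Lbd * ρ ^ 2)) :=
      mul_le_mul_of_nonneg_left hPB hζnn
    have hfin : ζ k * (e ⬝ᵥ (D k)⁻¹.mulVec e + 2 * α k * ε k + (α k) ^ 2 * (Lbd * ρ ^ 2))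
        ≤ ζ k * (e ⬝ᵥ (D k)⁻¹.mulVec e)
          + (5 * Lbd * ρ ^ 2) * ζ k * (α k) ^ 2 + 2 * Lbd * ζ k * α k * ε k := by
      
      nlinarith [mul_nonneg (mul_nonneg hζnn (hα k).le) (hε k),
        mul_nonneg (mul_nonneg hζnn (sq_nonneg (α k))) (mul_nonneg (by linarith : (0:ℝ) ≤ Lbd) (sq_nonneg ρ))]
    calc (p - xt) ⬝ᵥ (D (k + 1))⁻¹.mulVec (p - xt)
        ≤ ζ k * ((p - xt) ⬝ᵥ (D k)⁻¹.mulVec (p - xt)) := by rw [← d2]; exact d1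
      _ ≤ ζ k * ((yk - xt) ⬝ᵥ (D k)⁻¹.mulVec (yk - xt)) := d3
      _ ≤ ζ k * (e ⬝ᵥ (D k)⁻¹.mulVec e + 2 * α k * ε k + (α k) ^ 2 * (Lbd * ρ ^ 2)) := d4
      _ ≤ _ := hfin
end
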